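/- Let τ be a finite Wang tileset such that every east/west color appears on the west side of exactly one tile (equivalently, in the graph representation every vertex has outdegree exactly 1), and every east/west color appears on the east side of at least one tile. If τ admits a tiling of the plane, then τ admits a periodic tiling. In fact, every row of every tiling by τ is horizontally periodic with period dividing the number of tiles reachable in its cycle. -/

import Mathlib

structure WangTile (C : Type) where
  e : C
  w : C
  n : C
  s : C
deriving DecidableEq

def IsTiling {C : Type} (τ : Set (WangTile C)) (f : ℤ → ℤ → WangTile C) : Prop :=
  (∀ i j, f i j ∈ τ) ∧ (∀ i j, (f i j).e = (f (i+1) j).w) ∧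
    (∀ i j, (f i j).n = (f i (j+1)).s)

namespace Stmt8Aux

variable {C : Type}

instance [Finite C] : Finite (WangTile C) :=
  Finite.of_injective (fun t => (t.e, t.w, t.n, t.s)) (by
    rintro ⟨a1,a2,a3,a4⟩ ⟨b1,b2,b3,b4⟩ h
    simp_all)

open Classical in
noncomputable def step (f : ℤ → ℤ → WangTile C) (t : WangTile C) : WangTile C :=
  if h : ∃ q : ℤ × ℤ, f q.1 q.2 = t then f (h.choose.1 + 1) h.choose.2 else t

section
variable [Fintype C] [DecidableEq C] {τ : Finset (WangTile C)}
  {f : ℤ → ℤ → WangTile C}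

variable (hW : ∀ c : C, (∃ t ∈ τ, t.e = c ∨ t.w = c) →
      (τ.filter (fun t => t.w = c)).card = 1)

include hW

lemma uniq {t u v : WangTile C} (ht : t ∈ τ) (hu : u ∈ τ) (hv : v ∈ τ)
    (hut : u.w = t.e) (hvt : v.w = t.e) : u = v := by
  obtain ⟨a, ha⟩ := Finset.card_eq_one.mp (hW t.e ⟨t, ht, Or.inl rfl⟩)
  have h1 : u ∈ τ.filter (fun x => x.w = t.e) := Finset.mem_filter.2 ⟨hu, hut⟩
  have h2 : v ∈ τ.filter (fun x => x.w = t.e) := Finset.mem_filter.2 ⟨hv, hvt⟩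
  rw [ha, Finset.mem_singleton] at h1 h2
  rw [h1, h2]

lemma fwd (hf : IsTiling (↑τ) f) {i i' j j' : ℤ}
    (h : f i j = f i' j') : f (i+1) j = f (i'+1) j' := by
  obtain ⟨hm, he, -⟩ := hf
  exact uniq hW (hm i j) (hm (i+1) j) (hm (i'+1) j') (he i j).symm
    (by rw [h]; exact (he i' j').symm)

lemma fwd_n (hf : IsTiling (↑τ) f) {i i' j j' : ℤ} (h : f i j = f i' j') (n : ℕ) :
    f (i + (n:ℤ)) j = f (i' + (n:ℤ)) j' := by
  induction n with
  | zero => simpa using h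
  | succ n ih =>
      have h2 := fwd hW hf ih
      push_cast
      rw [show i + ((n:ℤ)+1) = (i + n) + 1 from by ring,
        show i' + ((n:ℤ)+1) = (i' + n) + 1 from by ring]
      exact h2

lemma step_spec (hf : IsTiling (↑τ) f) (i j : ℤ) : step f (f i j) = f (i+1) j := by
  have hex : ∃ q : ℤ × ℤ, f q.1 q.2 = f i j := ⟨(i, j), rfl⟩
  classical
  rw [step]
  rw [dif_pos hex]
  exact fwd hW hf hex.choose_spec

lemma bwd (hf : IsTiling (↑τ) f) {i i' j j' : ℤ}
    (h : f (i+1) j = f (i'+1) j') : f i j = f i' j' := by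
  have hfin : (Set.range fun q : ℤ × ℤ => f q.1 q.2).Finite := Set.toFinite _
  have hmaps : Set.MapsTo (step f) (Set.range fun q : ℤ × ℤ => f q.1 q.2)
      (Set.range fun q : ℤ × ℤ => f q.1 q.2) := by
    rintro t ⟨⟨a,b⟩, rfl⟩
    exact ⟨(a+1, b), (step_spec hW hf a b).symm⟩
  have hsurj : Set.SurjOn (step f) (Set.range fun q : ℤ × ℤ => f q.1 q.2)
      (Set.range fun q : ℤ × ℤ => f q.1 q.2) := by
    rintro t ⟨⟨a,b⟩, rfl⟩
    refine ⟨f (a-1) b, ⟨(a-1,b), rfl⟩, ?_⟩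
    rw [step_spec hW hf (a-1) b]
    norm_num
  have hinj : Set.InjOn (step f) (Set.range fun q : ℤ × ℤ => f q.1 q.2) :=
    ((hfin.surjOn_iff_bijOn_of_mapsTo hmaps).mp hsurj).injOn
  exact hinj ⟨(i,j), rfl⟩ ⟨(i',j'), rfl⟩
    (by rw [step_spec hW hf, step_spec hW hf, h])

lemma bwd_n (hf : IsTiling (↑τ) f) {i i' j j' : ℤ} (n : ℕ)
    (h : f (i + (n:ℤ)) j = f (i' + (n:ℤ)) j') : f i j = f i' j' := by
  induction n with
  | zero => simpa using h
  | succ n ih =>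
      apply ih
      apply bwd hW hf
      push_cast at h
      rw [show i + (n:ℤ) + 1 = i + ((n:ℤ)+1) from by ring,
        show i' + (n:ℤ) + 1 = i' + ((n:ℤ)+1) from by ring]
      exact h

lemma period_of_rep (hf : IsTiling (↑τ) f) {j a b : ℤ} (hab : a < b)
    (h : f a j = f b j) (i : ℤ) : f (i + (b - a)) j = f i j := by
  obtain ⟨n, hn⟩ : ∃ n : ℕ, a ≤ i + n := ⟨(a - i).toNat, by omega⟩
  obtain ⟨m, hm⟩ : ∃ m : ℕ, (m:ℤ) = i + n - a := ⟨(i + n - a).toNat, by omega⟩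
  have h1 := fwd_n hW hf h m
  rw [show a + (m:ℤ) = i + n from by omega,
    show b + (m:ℤ) = (i + (b-a)) + n from by omega] at h1
  exact (bwd_n hW hf n h1.symm)

omit hW

lemma period_mul {α : Type*} {F : ℤ → α} {c : ℤ} (h : ∀ i, F (i + c) = F i) :
    ∀ (k : ℤ) (i : ℤ), F (i + c * k) = F i := by
  intro k
  induction k using Int.induction_on with
  | zero => simp
  | succ k ih =>
      intro i
      rw [show i + c * ((k:ℤ)+1) = (i + c * k) + c from by ring, h, ih]
  | pred k ih =>
      intro i
      have h' := h (i + c * (-(k:ℤ)-1))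
      rw [show (i + c * (-(k:ℤ)-1)) + c = i + c * (-(k:ℤ)) from by ring, ih] at h'
      exact h'.symm

lemma period_emod {α : Type*} {F : ℤ → α} {c : ℤ} (hc : 0 < c)
    (h : ∀ i, F (i + c) = F i) (i : ℤ) : F i = F (i % c) := by
  have h2 := period_mul h (i / c) (i % c)
  rwa [Int.emod_add_mul_ediv i c] at h2

include hW

lemma row (hf : IsTiling (↑τ) f) (j : ℤ) :
    ∃ p : ℕ, 0 < p ∧ Set.ncard {t : WangTile C | ∃ i : ℤ, f i j = t} = p ∧
      ∀ i : ℤ, f (i + (p:ℤ)) j = f i j := by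
  classical
  obtain ⟨x, y, hxy, hFxy⟩ := Finite.exists_ne_map_eq_of_infinite (fun i : ℤ => f i j)
  have hrep : ∃ a b : ℤ, a < b ∧ f a j = f b j := by
    rcases lt_or_gt_of_ne hxy with h' | h'
    · exact ⟨x, y, h', hFxy⟩
    · exact ⟨y, x, h', hFxy.symm⟩
  obtain ⟨a, b, hab, hFab⟩ := hrep
  have hex : ∃ n : ℕ, 0 < n ∧ ∀ i : ℤ, f (i + (n:ℤ)) j = f i j := by
    refine ⟨(b - a).toNat, by omega, fun i => ?_⟩
    have h2 := period_of_rep hW hf hab hFab i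
    rwa [show (((b-a).toNat : ℕ):ℤ) = b - a from by omega]
  refine ⟨Nat.find hex, (Nat.find_spec hex).1, ?_, (Nat.find_spec hex).2⟩
  have hp := Nat.find_spec hex
  have hpz : (0:ℤ) < (Nat.find hex : ℤ) := by exact_mod_cast hp.1
  have hrange : {t : WangTile C | ∃ i : ℤ, f i j = t} =
      (fun i => f i j) '' (Set.Ico 0 ((Nat.find hex : ℕ):ℤ)) := by
    apply Set.Subset.antisymm
    · rintro t ⟨i, rfl⟩
      refine ⟨i % (Nat.find hex : ℤ), ⟨Int.emod_nonneg i (by omega),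
        Int.emod_lt_of_pos i hpz⟩, ?_⟩
      exact (period_emod (F := fun i => f i j) hpz hp.2 i).symm
    · rintro t ⟨i, -, rfl⟩
      exact ⟨i, rfl⟩
  have hinj : Set.InjOn (fun i => f i j) (Set.Ico 0 ((Nat.find hex : ℕ):ℤ)) := by
    have key : ∀ u v : ℤ, 0 ≤ u → v < (Nat.find hex : ℤ) → u < v →
        f u j = f v j → False := by
      intro u v hu0 hvp huv hF
      have hq : 0 < (v - u).toNat ∧ ∀ i : ℤ, f (i + (((v-u).toNat : ℕ):ℤ)) j = f i j := by
        refine ⟨by omega, fun i => ?_⟩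
        have h2 := period_of_rep hW hf huv hF i
        rwa [show ((((v-u).toNat : ℕ)):ℤ) = v - u from by omega]
      exact Nat.find_min hex (by omega : (v-u).toNat < Nat.find hex) hq
    rintro u ⟨hu0, hup⟩ v ⟨hv0, hvp⟩ huv
    by_contra hne
    rcases lt_or_gt_of_ne hne with h' | h'
    · exact key u v hu0 hvp h' huv
    · exact key v u hv0 hup h' huv.symm
  rw [hrange, Set.ncard_image_of_injOn hinj,
    show Set.Ico (0:ℤ) ((Nat.find hex : ℕ):ℤ) = ↑(Finset.Ico (0:ℤ) ((Nat.find hex:ℕ):ℤ))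
      from (Finset.coe_Ico _ _).symm,
    Set.ncard_coe_finset, Int.card_Ico]
  omega

end
end Stmt8Aux

open Stmt8Aux in
theorem stmt8 {C : Type} [Fintype C] [DecidableEq C] (τ : Finset (WangTile C))
    (hW : ∀ c : C, (∃ t ∈ τ, t.e = c ∨ t.w = c) →
      (τ.filter (fun t => t.w = c)).card = 1)
    (hE : ∀ c : C, (∃ t ∈ τ, t.e = c ∨ t.w = c) → ∃ t ∈ τ, t.e = c)
    (h : ∃ f, IsTiling (↑τ : Set (WangTile C)) f) :
    (∃ (g : ℤ → ℤ → WangTile C) (q : ℤ), IsTiling (↑τ : Set (WangTile C)) g ∧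
      0 < q ∧ ∀ i j, g (i + q) j = g i j ∧ g i (j + q) = g i j) ∧
    (∀ f, IsTiling (↑τ : Set (WangTile C)) f → ∀ j : ℤ, ∃ p : ℕ, 0 < p ∧
      p ∣ Set.ncard {t : WangTile C | ∃ i : ℤ, f i j = t} ∧
      ∀ i : ℤ, f (i + (p : ℤ)) j = f i j) := by
  constructor
  · obtain ⟨f, hf⟩ := h
    set Q : ℕ := (Nat.card (WangTile C)).factorial with hQdef
    have hQpos : 0 < Q := Nat.factorial_pos _
    have hQ : ∀ j i, f (i + (Q:ℤ)) j = f i j := by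
      intro j
      obtain ⟨p, hppos, hpcard, hper⟩ := row hW hf j
      have hple : p ≤ Nat.card (WangTile C) := by
        rw [← hpcard, ← Set.ncard_univ]
        exact Set.ncard_le_ncard (Set.subset_univ _) Set.finite_univ
      obtain ⟨k, hk⟩ := Nat.dvd_factorial hppos hple
      intro i
      have h2 := period_mul (F := fun i => f i j) hper (k:ℤ) i
      rwa [show ((p:ℤ)) * (k:ℤ) = ((Q:ℕ):ℤ) from by rw [hQdef, hk]; push_cast; ring] at h2
    -- pigeonhole on rows
    obtain ⟨y1, y2, hne, hphi⟩ := Finite.exists_ne_map_eq_of_infinite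
      (fun j : ℤ => fun k : Fin Q => f ((k : ℕ) : ℤ) j)
    have key : ∀ y1 y2 : ℤ,
        (fun k : Fin Q => f ((k:ℕ):ℤ) y1) = (fun k : Fin Q => f ((k:ℕ):ℤ) y2) →
        ∀ i, f i y1 = f i y2 := by
      intro y1 y2 hphi i
      have hQz : (0:ℤ) < (Q:ℤ) := by exact_mod_cast hQpos
      have h1 : f i y1 = f (i % (Q:ℤ)) y1 := period_emod (F := fun i => f i y1) hQz (hQ y1) i
      have h2 : f i y2 = f (i % (Q:ℤ)) y2 := period_emod (F := fun i => f i y2) hQz (hQ y2) i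
      have hnn : 0 ≤ i % (Q:ℤ) := Int.emod_nonneg i (by omega)
      have hlt : (i % (Q:ℤ)).toNat < Q := by
        have := Int.emod_lt_of_pos i hQz
        omega
      have h3 := congrFun hphi ⟨(i % (Q:ℤ)).toNat, hlt⟩
      simp only at h3
      rw [show ((i % (Q:ℤ)).toNat : ℤ) = i % (Q:ℤ) from by omega] at h3
      rw [h1, h2]
      exact h3
    have hrows : ∃ j1 j2 : ℤ, j1 < j2 ∧ ∀ i, f i j1 = f i j2 := by
      rcases lt_or_gt_of_ne hne with h' | h'
      · exact ⟨y1, y2, h', key y1 y2 hphi⟩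
      · exact ⟨y2, y1, h', key y2 y1 hphi.symm⟩
    obtain ⟨j1, j2, hj12, hroweq⟩ := hrows
    set v : ℤ := j2 - j1 with hvdef
    have hv : 0 < v := by omega
    have hshift : ∀ z w : ℤ, (z + w) % v = (z % v + w) % v := by
      intro z w
      conv_lhs => rw [show z + w = (z % v + w) + v * (z / v) from by
        have := Int.mul_ediv_add_emod z v; linarith]
      rw [Int.add_mul_emod_self_left]
    refine ⟨fun i j => f i (j1 + (j - j1) % v), (Q:ℤ) * v,
      ⟨fun i j => hf.1 _ _, fun i j => hf.2.1 _ _, ?_⟩, by positivity, ?_⟩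
    · -- vertical tiling condition
      intro i j
      dsimp only
      have hr0 : 0 ≤ (j - j1) % v := Int.emod_nonneg _ (by omega)
      have hrv : (j - j1) % v < v := Int.emod_lt_of_pos _ hv
      have hstep : (j + 1 - j1) % v = ((j - j1) % v + 1) % v := by
        rw [show j + 1 - j1 = (j - j1) + 1 from by ring, hshift]
      by_cases hcase : (j - j1) % v + 1 < v
      · rw [hstep, Int.emod_eq_of_lt (by omega) hcase,
          show j1 + ((j - j1) % v + 1) = (j1 + (j - j1) % v) + 1 from by ring]
        exact hf.2.2 i _
      · have hrv1 : (j - j1) % v + 1 = v := by omega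
        rw [hstep, hrv1, Int.emod_self, add_zero]
        have h1 := hf.2.2 i (j1 + (j - j1) % v)
        rw [h1, show j1 + (j - j1) % v + 1 = j2 from by omega, ← hroweq i]
      -- periodicity
    · intro i j
      dsimp only
      constructor
      · exact period_mul (F := fun i => f i (j1 + (j - j1) % v)) (hQ (j1 + (j - j1) % v)) v i
      · rw [show j + (Q:ℤ) * v - j1 = (j - j1) + v * (Q:ℤ) from by ring,
          Int.add_mul_emod_self_left]
  · intro f hf j
    obtain ⟨p, hppos, hpcard, hper⟩ := row hW hf j
    exact ⟨p, hppos, by rw [hpcard], hper⟩
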